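/- Let c = min{pq, p - pq} with p > 0 and 0 < q < 1, and let ν > 0. Consider the ODE dz/dt = (N/p)·z·(z+pq)·(z+pq-p) ± ν·(N/p)·ρ·(z+pq)·(z+pq-p) (with either fixed sign), where N > 0 and |ρ| ≤ c/ν. If z is a solution with |z(0)| ≤ c, then |z(t)| ≤ c for all t ≥ 0. -/

import Mathlib

private lemma prod3_le (C u1 v1 u2 v2 u3 v3 : ℝ) (hC : 0 ≤ C) (h1 : 0 ≤ u1) (h12 : u1 ≤ v1)
    (h2 : 0 ≤ u2) (h22 : u2 ≤ v2) (h3 : 0 ≤ u3) (h32 : u3 ≤ v3) :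
    C * u1 * u2 * u3 ≤ C * v1 * v2 * v3 := by
  have hv1 : 0 ≤ v1 := h1.trans h12
  have hv2 : 0 ≤ v2 := h2.trans h22
  apply mul_le_mul _ h32 h3 (by positivity)
  apply mul_le_mul _ h22 h2 (by positivity)
  exact mul_le_mul_of_nonneg_left h12 hC

set_option maxHeartbeats 1000000 in
private lemma key_alg (p q N c a K : ℝ) (hp : 0 < p) (hq : 0 < q) (hq1 : q < 1)
    (hN : 0 < N) (hcpq : c ≤ p * q) (hcpq' : c ≤ p - p * q) (hc0 : 0 < c)
    (ha : |a| ≤ c) (hK : K = N / p * (c+1) * (2*c+1) * (c+1+p) / c)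
    (x : ℝ) (h1 : c ≤ |x|) (h2 : |x| ≤ c + 1) :
    2 * x * (N / p * (x + a) * (x + p * q) * (x + p * q - p)) ≤ K * (x ^ 2 - c ^ 2) := by
  obtain ⟨ha1, ha2⟩ := abs_le.mp ha
  obtain ⟨hx1, hx2⟩ := abs_le.mp h2
  have hNp : (0:ℝ) < N / p := by positivity
  set B : ℝ := N / p * (c+1) * (2*c+1) * (c+1+p) with hB_def
  have hB : (0:ℝ) ≤ B := by positivity
  have hKc : K * c = B := by rw [hK]; field_simp
  have hK0 : 0 ≤ K := by rw [hK]; positivity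
  have e1 : B * x = K * c * x := by rw [hKc]
  have e2 : B * c = K * c * c := by rw [hKc]
  have hxsq : c ^ 2 ≤ x ^ 2 := by nlinarith [sq_abs x, abs_nonneg x]
  have hRHS : 0 ≤ K * (x ^ 2 - c ^ 2) := mul_nonneg hK0 (by linarith)
  rcases le_abs.mp h1 with hx | hx
  · have hx0 : 0 ≤ x := hc0.le.trans hx
    have hxa : 0 ≤ x + a := by linarith
    have hxpq : 0 ≤ x + p * q := by nlinarith
    rcases le_or_gt (x + p * q - p) 0 with hs1 | hs1
    · have hP : 0 ≤ 2 * (N / p) * x * (x + a) * (x + p * q) := by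
        have h5 : 0 ≤ 2 * (N / p) * x := by positivity
        exact mul_nonneg (mul_nonneg h5 hxa) hxpq
      have h4 : 2 * x * (N / p * (x + a) * (x + p * q) * (x + p * q - p))
          = (2 * (N / p) * x * (x + a) * (x + p * q)) * (x + p * q - p) := by ring
      rw [h4]
      exact le_trans (mul_nonpos_of_nonneg_of_nonpos hP hs1) hRHS
    · have hP : 2 * (N / p) * x * (x + a) * (x + p * q) ≤ 2 * B := by
        have := prod3_le (2 * (N / p)) x (c+1) (x+a) (2*c+1) (x+p*q) (c+1+p)
          (by positivity) hx0 hx2 hxa (by linarith) hxpq (by linarith)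
        calc 2 * (N / p) * x * (x + a) * (x + p * q)
            ≤ 2 * (N / p) * (c+1) * (2*c+1) * (c+1+p) := this
          _ = 2 * B := by rw [hB_def]; ring
      have h3 : x + p * q - p ≤ x - c := by linarith
      have h4 : 2 * x * (N / p * (x + a) * (x + p * q) * (x + p * q - p))
          = (2 * (N / p) * x * (x + a) * (x + p * q)) * (x + p * q - p) := by ring
      rw [h4]
      calc (2 * (N / p) * x * (x + a) * (x + p * q)) * (x + p * q - p)
          ≤ (2 * B) * (x - c) :=
            mul_le_mul hP h3 hs1.le (by positivity)
        _ ≤ K * (x ^ 2 - c ^ 2) := by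
            nlinarith [mul_nonneg hK0 (sq_nonneg (x - c)), e1, e2]
  · have hx0 : x ≤ 0 := by linarith
    have hxa : x + a ≤ 0 := by linarith
    have hxp : x + p * q - p < 0 := by nlinarith
    rcases le_or_gt 0 (x + p * q) with hs1 | hs1
    · have hQ : 2 * (N / p) * (x * (x + a)) * (x + p * q - p) ≤ 0 := by
        apply mul_nonpos_of_nonneg_of_nonpos _ hxp.le
        have h5 : 0 ≤ x * (x + a) := by
          nlinarith [mul_nonneg (neg_nonneg.mpr hx0) (neg_nonneg.mpr hxa)]
        positivity
      have h4 : 2 * x * (N / p * (x + a) * (x + p * q) * (x + p * q - p))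
          = (2 * (N / p) * (x * (x + a)) * (x + p * q - p)) * (x + p * q) := by ring
      rw [h4]
      exact le_trans (mul_nonpos_of_nonpos_of_nonneg hQ hs1) hRHS
    · have hQ : 2 * (N / p) * (-x) * (-x - a) * (p - p * q - x) ≤ 2 * B := by
        have := prod3_le (2 * (N / p)) (-x) (c+1) (-x-a) (2*c+1) (p-p*q-x) (c+1+p)
          (by positivity) (by linarith) (by linarith) (by linarith) (by linarith)
          (by nlinarith) (by linarith)
        calc 2 * (N / p) * (-x) * (-x - a) * (p - p * q - x)
            ≤ 2 * (N / p) * (c+1) * (2*c+1) * (c+1+p) := this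
          _ = 2 * B := by rw [hB_def]; ring
      have h3 : -(x + p * q) ≤ -x - c := by linarith
      have h4 : 2 * x * (N / p * (x + a) * (x + p * q) * (x + p * q - p))
          = (2 * (N / p) * (-x) * (-x - a) * (p - p * q - x)) * (-(x + p * q)) := by ring
      rw [h4]
      calc (2 * (N / p) * (-x) * (-x - a) * (p - p * q - x)) * (-(x + p * q))
          ≤ (2 * B) * (-x - c) :=
            mul_le_mul hQ h3 (by linarith) (by positivity)
        _ ≤ K * (x ^ 2 - c ^ 2) := by
            nlinarith [mul_nonneg hK0 (sq_nonneg (x + c)), e1, e2]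

/-- Forward invariance of `[-c, c]` for the cubic chemotaxis ODE
`dz/dt = (N/p) z (z+pq)(z+pq-p) ± ν (N/p) ρ (z+pq)(z+pq-p)`
under the shallow-gradient condition `|ρ| ≤ c/ν`. -/
theorem stmt_0 (p q N ν ρ : ℝ) (hp : 0 < p) (hq : 0 < q) (hq1 : q < 1)
    (hN : 0 < N) (hν : 0 < ν) (s : ℝ) (hs : s = 1 ∨ s = -1)
    (c : ℝ) (hc : c = min (p * q) (p - p * q))
    (hρ : |ρ| ≤ c / ν)
    (z : ℝ → ℝ)
    (hz : ∀ t, 0 ≤ t → HasDerivAt z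
      (N / p * z t * (z t + p * q) * (z t + p * q - p)
        + s * ν * (N / p) * ρ * (z t + p * q) * (z t + p * q - p)) t)
    (h0 : |z 0| ≤ c) :
    ∀ t, 0 ≤ t → |z t| ≤ c := by
  have hcpq : c ≤ p * q := by rw [hc]; exact min_le_left _ _
  have hcpq' : c ≤ p - p * q := by rw [hc]; exact min_le_right _ _
  have hc0 : 0 < c := by rw [hc]; apply lt_min (by positivity) (by nlinarith)
  set a : ℝ := s * ν * ρ with ha_def
  have ha : |a| ≤ c := by
    have hs1 : |s| = 1 := by rcases hs with h | h <;> simp [h]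
    have h2 : |a| = ν * |ρ| := by
      rw [ha_def, abs_mul, abs_mul, hs1, abs_of_pos hν]; ring
    rw [h2]
    calc ν * |ρ| ≤ ν * (c / ν) := mul_le_mul_of_nonneg_left hρ hν.le
      _ = c := by field_simp
  set K : ℝ := N / p * (c+1) * (2*c+1) * (c+1+p) / c with hK_def
  set w : ℝ → ℝ := fun u => 2 * z u * (N / p * (z u + a) * (z u + p * q) * (z u + p * q - p))
    with hw_def
  set v : ℝ → ℝ := fun u => z u ^ 2 - c ^ 2 with hv_def
  have hv' : ∀ u, 0 ≤ u → HasDerivAt v (w u) u := by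
    intro u hu
    have h2 : HasDerivAt z (N / p * (z u + a) * (z u + p * q) * (z u + p * q - p)) u := by
      have h1 := hz u hu
      convert h1 using 1
      rw [ha_def]; ring
    have h3 := (h2.pow 2).sub_const (c ^ 2)
    simp only [hv_def, hw_def]
    refine HasDerivAt.congr_deriv h3 ?_
    push_cast
    norm_num
  have hcont : ∀ u, 0 ≤ u → ContinuousAt v u := fun u hu => (hv' u hu).continuousAt
  have hv0 : v 0 ≤ 0 := by
    obtain ⟨h1, h2⟩ := abs_le.mp h0
    simp only [hv_def]
    nlinarith
  have key : ∀ u, 0 ≤ v u → v u ≤ 2 * c + 1 → w u ≤ K * v u := by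
    intro u h1 h2
    simp only [hv_def] at h1 h2
    have hzl : c ≤ |z u| := by
      nlinarith [sq_abs (z u), abs_nonneg (z u)]
    have hzu : |z u| ≤ c + 1 := by
      nlinarith [sq_abs (z u), abs_nonneg (z u)]
    have h3 := key_alg p q N c a K hp hq hq1 hN hcpq hcpq' hc0 ha hK_def (z u) hzl hzu
    simpa [hw_def, hv_def] using h3
  by_contra hcon
  push_neg at hcon
  obtain ⟨T, hT0, hT⟩ := hcon
  have hvT : 0 < v T := by
    simp only [hv_def]
    nlinarith [sq_abs (z T), abs_nonneg (z T)]
  set δ : ℝ := min (v T) (2 * c + 1) with hδ_def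
  have hδ0 : 0 < δ := lt_min hvT (by linarith)
  set S : Set ℝ := {u | u ∈ Set.Icc 0 T ∧ δ ≤ v u} with hS_def
  have hTS : T ∈ S := ⟨⟨hT0, le_refl T⟩, min_le_left _ _⟩
  have hSne : S.Nonempty := ⟨T, hTS⟩
  have hSbdd : BddBelow S := ⟨0, fun u hu => hu.1.1⟩
  have hSclosed : IsClosed S := by
    have hcv : ContinuousOn v (Set.Icc 0 T) := fun u hu => (hcont u hu.1).continuousWithinAt
    have hSeq : S = Set.Icc 0 T ∩ v ⁻¹' Set.Ici δ := by
      ext u; simp [hS_def]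
    rw [hSeq]
    exact hcv.preimage_isClosed_of_isClosed isClosed_Icc isClosed_Ici
  set t₁ : ℝ := sInf S with ht₁_def
  obtain ⟨⟨ht₁0, ht₁T⟩, ht₁δ⟩ := hSclosed.csInf_mem hSne hSbdd
  have hlt : ∀ u, 0 ≤ u → u < t₁ → v u < δ := by
    intro u hu hut
    by_contra h
    push_neg at h
    have hu' : u ∈ S := ⟨⟨hu, hut.le.trans ht₁T⟩, h⟩
    exact absurd (csInf_le hSbdd hu') (not_le.mpr hut)
  set Tset : Set ℝ := {u | u ∈ Set.Icc 0 t₁ ∧ v u ≤ 0} with hTset_def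
  have h0T : (0:ℝ) ∈ Tset := ⟨⟨le_refl 0, ht₁0⟩, hv0⟩
  have hTne : Tset.Nonempty := ⟨0, h0T⟩
  have hTbdd : BddAbove Tset := ⟨t₁, fun u hu => hu.1.2⟩
  have hTclosed : IsClosed Tset := by
    have hcv : ContinuousOn v (Set.Icc 0 t₁) := fun u hu => (hcont u hu.1).continuousWithinAt
    have hTeq : Tset = Set.Icc 0 t₁ ∩ v ⁻¹' Set.Iic 0 := by
      ext u; simp [hTset_def]
    rw [hTeq]
    exact hcv.preimage_isClosed_of_isClosed isClosed_Icc isClosed_Iic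
  set t₀ : ℝ := sSup Tset with ht₀_def
  obtain ⟨⟨ht₀0, ht₀1⟩, hvt₀⟩ := hTclosed.csSup_mem hTne hTbdd
  have ht₀lt : t₀ < t₁ := by
    rcases lt_or_eq_of_le ht₀1 with h | h
    · exact h
    · rw [h] at hvt₀; linarith
  have hpos : ∀ u, t₀ < u → u ≤ t₁ → 0 < v u := by
    intro u hu1 hu2
    by_contra h
    push_neg at h
    have hu' : u ∈ Tset := ⟨⟨by linarith, hu2⟩, h⟩
    exact absurd (le_csSup hTbdd hu') (not_le.mpr hu1)
  have hvt₀0 : v t₀ = 0 := by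
    have h1 : Filter.Tendsto v (nhdsWithin t₀ (Set.Ioi t₀)) (nhds (v t₀)) :=
      ((hcont t₀ ht₀0).tendsto).mono_left nhdsWithin_le_nhds
    have h2 : ∀ᶠ u in nhdsWithin t₀ (Set.Ioi t₀), 0 ≤ v u := by
      filter_upwards [Ioo_mem_nhdsGT_of_mem ⟨le_refl t₀, ht₀lt⟩] with u hu
      exact (hpos u hu.1 hu.2.le).le
    have h3 : 0 ≤ v t₀ := ge_of_tendsto h1 h2
    linarith
  have hbound : ∀ x ∈ Set.Ico t₀ t₁, w x ≤ K * v x + 0 := by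
    intro x hx
    rw [add_zero]
    have hx0 : 0 ≤ x := le_trans ht₀0 hx.1
    have hvge : 0 ≤ v x := by
      rcases eq_or_lt_of_le hx.1 with h | h
      · rw [← h, hvt₀0]
      · exact (hpos x h hx.2.le).le
    have hvle : v x ≤ 2 * c + 1 := by
      have h5 := hlt x hx0 hx.2
      have h6 := min_le_right (v T) (2 * c + 1)
      rw [← hδ_def] at h6
      linarith
    exact key x hvge hvle
  have hcontOn : ContinuousOn v (Set.Icc t₀ t₁) :=
    fun u hu => (hcont u (le_trans ht₀0 hu.1)).continuousWithinAt
  have hslope : ∀ x ∈ Set.Ico t₀ t₁, ∀ r, w x < r →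
      ∃ᶠ y in nhdsWithin x (Set.Ioi x), (y - x)⁻¹ * (v y - v x) < r := fun x hx r hr =>
    ((hv' x (le_trans ht₀0 hx.1)).hasDerivWithinAt.liminf_right_slope_le hr)
  have grr := le_gronwallBound_of_liminf_deriv_right_le (δ := 0) (K := K) (ε := 0)
    hcontOn hslope (le_of_eq hvt₀0) hbound
  have hfin := grr t₁ ⟨ht₀lt.le, le_refl t₁⟩
  rw [gronwallBound_ε0_δ0] at hfin
  linarith
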